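/- Let Q be a flexible IP loop. Then M0(Q) ∩ M2(Q) = M0(Q) ∩ M3(Q). -/

import Mathlib

universe u

namespace CRIFPaper

/-- A loop: a set with a binary operation and a neutral element `1` in which
all left and right translations are bijections (equivalently, the equations
`a * x = b` and `y * a = b` have unique solutions). -/
class Loop (Q : Type u) extends Mul Q, One Q where
  one_mul : ∀ x : Q, 1 * x = x
  mul_one : ∀ x : Q, x * 1 = x
  mulLeft_bijective : ∀ a : Q, Function.Bijective (fun x : Q => a * x)
  mulRight_bijective : ∀ a : Q, Function.Bijective (fun x : Q => x * a)

/-- An inverse property (IP) loop. -/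
class IPLoop (Q : Type u) extends Loop Q, Inv Q where
  lip : ∀ x y : Q, x⁻¹ * (x * y) = y
  rip : ∀ x y : Q, (y * x) * x⁻¹ = y

/-- Moufang elements of type `M0`. -/
def M0 (Q : Type u) [Mul Q] : Set Q :=
  {c : Q | ∀ x y : Q, (c * (x * y)) * c = (c * x) * (y * c)}

/-- Moufang elements of type `M1`. -/
def M1 (Q : Type u) [Mul Q] : Set Q :=
  {c : Q | ∀ x y : Q, x * (c * (x * y)) = ((x * c) * x) * y}

/-- Moufang elements of type `M2`. -/
def M2 (Q : Type u) [Mul Q] : Set Q :=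
  {c : Q | ∀ x y : Q, (x * c) * (y * x) = (x * (c * y)) * x}

/-- Moufang elements of type `M3`. -/
def M3 (Q : Type u) [Mul Q] : Set Q :=
  {c : Q | ∀ x y : Q, (x * y) * (c * x) = (x * (y * c)) * x}

/-- C elements. -/
def C0 (Q : Type u) [Mul Q] : Set Q :=
  {c : Q | ∀ x y : Q, x * (c * (c * y)) = ((x * c) * c) * y}


section Basics

variable {Q : Type u} [IPLoop Q]

private lemma inv_mul_self (x : Q) : x⁻¹ * x = 1 := by
  have h1 := IPLoop.rip x x⁻¹
  have h2 : (1 : Q) * x⁻¹ = x⁻¹ := Loop.one_mul _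
  exact (Loop.mulRight_bijective x⁻¹).1 (h1.trans h2.symm)

private lemma mul_inv_self (x : Q) : x * x⁻¹ = 1 := by
  have h1 := IPLoop.lip x x⁻¹
  have h2 : x⁻¹ * (1 : Q) = x⁻¹ := Loop.mul_one _
  exact (Loop.mulLeft_bijective x⁻¹).1 (h1.trans h2.symm)

private lemma inv_inv' (x : Q) : x⁻¹⁻¹ = x := by
  have h1 := IPLoop.rip x⁻¹ x
  rw [mul_inv_self, Loop.one_mul] at h1
  exact h1

private lemma inv_rev (x y : Q) : (x * y)⁻¹ = y⁻¹ * x⁻¹ := by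
  have h2 := IPLoop.lip x y
  have h3 := IPLoop.rip (x * y) x⁻¹
  rw [h2] at h3
  have h1 := IPLoop.lip y (x * y)⁻¹
  rw [h3] at h1
  exact h1.symm

private lemma flexinv (hflex : ∀ x y : Q, x * (y * x) = (x * y) * x) (x y : Q) :
    x⁻¹ * (y * x) = (x⁻¹ * y) * x := by
  have h0 : x * (x⁻¹ * y) = y := by
    have h := IPLoop.lip x⁻¹ y
    rwa [inv_inv'] at h
  have h1 := hflex x (x⁻¹ * y)
  have h2 := IPLoop.lip x ((x⁻¹ * y) * x)
  grind

end Basics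

private lemma M0inv {Q : Type u} [IPLoop Q] {c : Q}
    (hflex : ∀ x y : Q, x * (y * x) = (x * y) * x)
    (h0 : ∀ x y : Q, (c * (x * y)) * c = (c * x) * (y * c)) (a b : Q) :
    (c⁻¹ * (a * b)) * c⁻¹ = (c⁻¹ * a) * (b * c⁻¹) := by
    have e0 : a⁻¹⁻¹ = a := inv_inv' a
    have e1 : b⁻¹⁻¹ = b := inv_inv' b
    have e2 : c⁻¹⁻¹ = c := inv_inv' c
    have e3 : (c⁻¹ * (a * b))⁻¹⁻¹ = (c⁻¹ * (a * b)) := inv_inv' (c⁻¹ * (a * b))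
    have e4 : (a * b)⁻¹ = (b⁻¹ * a⁻¹) := inv_rev a b
    have e5 : (c * b⁻¹)⁻¹ = (b⁻¹⁻¹ * c⁻¹) := inv_rev c b⁻¹
    have e6 : (a⁻¹ * c)⁻¹ = (c⁻¹ * a⁻¹⁻¹) := inv_rev a⁻¹ c
    have e7 : (c⁻¹ * (a * b))⁻¹ = ((a * b)⁻¹ * c⁻¹⁻¹) := inv_rev c⁻¹ (a * b)
    have e8 : ((c * (b⁻¹ * a⁻¹)) * c) = ((c * b⁻¹) * (a⁻¹ * c)) := h0 b⁻¹ a⁻¹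
    have e9 : (c * ((a * b)⁻¹ * c)) = ((c * (a * b)⁻¹) * c) := hflex c (a * b)⁻¹
    have e10 : (c * ((a * b)⁻¹ * c))⁻¹ = (((a * b)⁻¹ * c)⁻¹ * c⁻¹) := inv_rev c ((a * b)⁻¹ * c)
    have e11 : ((c * b⁻¹) * (a⁻¹ * c))⁻¹ = ((a⁻¹ * c)⁻¹ * (c * b⁻¹)⁻¹) := inv_rev (c * b⁻¹) (a⁻¹ * c)
    grind

private lemma Bp {Q : Type u} [IPLoop Q] {c : Q}
    (hflex : ∀ x y : Q, x * (y * x) = (x * y) * x)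
    (h0 : ∀ x y : Q, (c * (x * y)) * c = (c * x) * (y * c)) (a b : Q) :
    ((c * a) * c) * (c⁻¹ * b) = c * (a * b) := by
    have e0 : ((a * b) * b⁻¹) = a := IPLoop.rip b a
    have e1 : b⁻¹⁻¹ = b := inv_inv' b
    have e2 : (b⁻¹ * c)⁻¹ = (c⁻¹ * b⁻¹⁻¹) := inv_rev b⁻¹ c
    have e3 : ((c * ((a * b) * b⁻¹)) * c) = ((c * (a * b)) * (b⁻¹ * c)) := h0 (a * b) b⁻¹
    have e4 : (((c * (a * b)) * (b⁻¹ * c)) * (b⁻¹ * c)⁻¹) = (c * (a * b)) := IPLoop.rip (b⁻¹ * c) (c * (a * b))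
    grind

private lemma Cp {Q : Type u} [IPLoop Q] {c : Q}
    (hflex : ∀ x y : Q, x * (y * x) = (x * y) * x)
    (h0 : ∀ x y : Q, (c * (x * y)) * c = (c * x) * (y * c)) (a b : Q) :
    (a * c⁻¹) * ((c * b) * c) = (a * b) * c := by
    have e0 : (a⁻¹ * (a * b)) = b := IPLoop.lip a b
    have e1 : a⁻¹⁻¹ = a := inv_inv' a
    have e2 : (c * a⁻¹)⁻¹ = (a⁻¹⁻¹ * c⁻¹) := inv_rev c a⁻¹
    have e3 : ((c * (a⁻¹ * (a * b))) * c) = ((c * a⁻¹) * ((a * b) * c)) := h0 a⁻¹ (a * b)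
    have e4 : ((c * a⁻¹)⁻¹ * ((c * a⁻¹) * ((a * b) * c))) = ((a * b) * c) := IPLoop.lip (c * a⁻¹) ((a * b) * c)
    grind

private lemma Bpi {Q : Type u} [IPLoop Q] {c : Q}
    (hflex : ∀ x y : Q, x * (y * x) = (x * y) * x)
    (h0 : ∀ x y : Q, (c * (x * y)) * c = (c * x) * (y * c)) (a b : Q) :
    ((c⁻¹ * a) * c⁻¹) * (c * b) = c⁻¹ * (a * b) := by
    have e0 : (((c * b) * c) * c⁻¹) = (c * b) := IPLoop.rip c (c * b)
    have e1 : (((c⁻¹ * (a * b)) * c) * c⁻¹) = (c⁻¹ * (a * b)) := IPLoop.rip c (c⁻¹ * (a * b))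
    have e2 : (c⁻¹ * (a * c⁻¹)) = ((c⁻¹ * a) * c⁻¹) := hflex c⁻¹ a
    have e3 : (c⁻¹ * ((a * b) * c)) = ((c⁻¹ * (a * b)) * c) := flexinv hflex c (a * b)
    have e4 : ((a * c⁻¹) * ((c * b) * c)) = ((a * b) * c) := Cp hflex h0 a b
    have e5 : ((c⁻¹ * ((a * c⁻¹) * ((c * b) * c))) * c⁻¹) = ((c⁻¹ * (a * c⁻¹)) * (((c * b) * c) * c⁻¹)) := M0inv hflex h0 (a * c⁻¹) ((c * b) * c)
    grind

private lemma Cpi {Q : Type u} [IPLoop Q] {c : Q}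
    (hflex : ∀ x y : Q, x * (y * x) = (x * y) * x)
    (h0 : ∀ x y : Q, (c * (x * y)) * c = (c * x) * (y * c)) (a b : Q) :
    (a * c) * ((c⁻¹ * b) * c⁻¹) = (a * b) * c⁻¹ := by
    have e0 : ((1 : Q) * ((a * b) * c⁻¹)) = ((a * b) * c⁻¹) := Loop.one_mul ((a * b) * c⁻¹)
    have e1 : (c⁻¹ * (c * (a * c))) = (a * c) := IPLoop.lip c (a * c)
    have e2 : (c * (a * c)) = ((c * a) * c) := hflex c a
    have e3 : (c⁻¹ * c) = (1 : Q) := inv_mul_self c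
    have e4 : ((c⁻¹ * (c * (a * b))) * c⁻¹) = ((c⁻¹ * c) * ((a * b) * c⁻¹)) := M0inv hflex h0 c (a * b)
    have e5 : (((c * a) * c) * (c⁻¹ * b)) = (c * (a * b)) := Bp hflex h0 a b
    have e6 : ((c⁻¹ * ((c * (a * c)) * (c⁻¹ * b))) * c⁻¹) = ((c⁻¹ * (c * (a * c))) * ((c⁻¹ * b) * c⁻¹)) := M0inv hflex h0 (c * (a * c)) (c⁻¹ * b)
    grind

private lemma B1el {Q : Type u} [IPLoop Q] {c : Q}
    (hflex : ∀ x y : Q, x * (y * x) = (x * y) * x)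
    (h0 : ∀ x y : Q, (c * (x * y)) * c = (c * x) * (y * c)) (a b : Q) :
    ((c * a) * c) * b = c * (a * (c * b)) := by
    have e0 : (c⁻¹ * (c * b)) = b := IPLoop.lip c b
    have e1 : (((c * a) * c) * (c⁻¹ * (c * b))) = (c * (a * (c * b))) := Bp hflex h0 a (c * b)
    grind

private lemma C1el {Q : Type u} [IPLoop Q] {c : Q}
    (hflex : ∀ x y : Q, x * (y * x) = (x * y) * x)
    (h0 : ∀ x y : Q, (c * (x * y)) * c = (c * x) * (y * c)) (a b : Q) :
    b * ((c * a) * c) = ((b * c) * a) * c := by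
    have e0 : ((b * c) * c⁻¹) = b := IPLoop.rip c b
    have e1 : (((b * c) * c⁻¹) * ((c * a) * c)) = (((b * c) * a) * c) := Cp hflex h0 (b * c) a
    grind

private lemma B1eli {Q : Type u} [IPLoop Q] {c : Q}
    (hflex : ∀ x y : Q, x * (y * x) = (x * y) * x)
    (h0 : ∀ x y : Q, (c * (x * y)) * c = (c * x) * (y * c)) (a b : Q) :
    ((c⁻¹ * a) * c⁻¹) * b = c⁻¹ * (a * (c⁻¹ * b)) := by
    have e0 : (c⁻¹⁻¹ * (c⁻¹ * b)) = b := IPLoop.lip c⁻¹ b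
    have e1 : c⁻¹⁻¹ = c := inv_inv' c
    have e2 : (((c⁻¹ * a) * c⁻¹) * (c * (c⁻¹ * b))) = (c⁻¹ * (a * (c⁻¹ * b))) := Bpi hflex h0 a (c⁻¹ * b)
    grind

private lemma C1eli {Q : Type u} [IPLoop Q] {c : Q}
    (hflex : ∀ x y : Q, x * (y * x) = (x * y) * x)
    (h0 : ∀ x y : Q, (c * (x * y)) * c = (c * x) * (y * c)) (a b : Q) :
    b * ((c⁻¹ * a) * c⁻¹) = ((b * c⁻¹) * a) * c⁻¹ := by
    have e0 : ((b * c⁻¹) * c⁻¹⁻¹) = b := IPLoop.rip c⁻¹ b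
    have e1 : c⁻¹⁻¹ = c := inv_inv' c
    have e2 : (((b * c⁻¹) * c) * ((c⁻¹ * a) * c⁻¹)) = (((b * c⁻¹) * a) * c⁻¹) := Cpi hflex h0 (b * c⁻¹) a
    grind

/-- In a flexible IP loop, `M0 ∩ M2 = M0 ∩ M3`. -/
theorem statement5 (Q : Type u) [IPLoop Q]
    (hflex : ∀ x y : Q, x * (y * x) = (x * y) * x) :
    M0 Q ∩ M2 Q = M0 Q ∩ M3 Q := by
  ext g
  simp only [M0, M2, M3, Set.mem_inter_iff, Set.mem_setOf_eq]
  constructor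
  · rintro ⟨h0, h2⟩
    refine ⟨h0, fun x y => ?_⟩
    have e0 : (x⁻¹ * (x * y)) = y := IPLoop.lip x y
    have e1 : (g⁻¹ * (g * x)) = x := IPLoop.lip g x
    have e2 : (g⁻¹ * (g * ((x * (y * g)) * x))) = ((x * (y * g)) * x) := IPLoop.lip g ((x * (y * g)) * x)
    have e3 : (g⁻¹⁻¹ * (g⁻¹ * y)) = y := IPLoop.lip g⁻¹ y
    have e4 : ((y * g) * g⁻¹) = y := IPLoop.rip g y
    have e5 : ((x * g⁻¹) * g⁻¹⁻¹) = x := IPLoop.rip g⁻¹ x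
    have e6 : (((g * x) * g⁻¹) * g⁻¹⁻¹) = (g * x) := IPLoop.rip g⁻¹ (g * x)
    have e7 : ((((x * (y * g)) * x) * g⁻¹) * g⁻¹⁻¹) = ((x * (y * g)) * x) := IPLoop.rip g⁻¹ ((x * (y * g)) * x)
    have e8 : (x * ((y * g) * x)) = ((x * (y * g)) * x) := hflex x (y * g)
    have e9 : (g * (y * g)) = ((g * y) * g) := hflex g y
    have e10 : (g⁻¹ * ((y * g) * g⁻¹)) = ((g⁻¹ * (y * g)) * g⁻¹) := hflex g⁻¹ (y * g)
    have e11 : ((g * x) * (y * (g * x))) = (((g * x) * y) * (g * x)) := hflex (g * x) y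
    have e12 : x⁻¹⁻¹ = x := inv_inv' x
    have e13 : g⁻¹⁻¹ = g := inv_inv' g
    have e14 : (g * x⁻¹)⁻¹ = (x⁻¹⁻¹ * g⁻¹) := inv_rev g x⁻¹
    have e15 : (g⁻¹⁻¹ * (x * g⁻¹)) = ((g⁻¹⁻¹ * x) * g⁻¹) := flexinv hflex g⁻¹ x
    have e16 : ((g * (x⁻¹ * (x * y))) * g) = ((g * x⁻¹) * ((x * y) * g)) := h0 x⁻¹ (x * y)
    have e17 : (((g⁻¹ * (y * g)) * g⁻¹) * (g * x)) = (g⁻¹ * ((y * g) * x)) := Bpi hflex h0 (y * g) x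
    have e18 : ((y * g) * ((g⁻¹ * (g * x)) * g⁻¹)) = ((y * (g * x)) * g⁻¹) := Cpi hflex h0 y (g * x)
    have e19 : ((g * x⁻¹)⁻¹ * ((g * x⁻¹) * ((x * y) * g))) = ((x * y) * g) := IPLoop.lip (g * x⁻¹) ((x * y) * g)
    have e20 : ((g⁻¹ * ((g * x) * (y * (g * x)))) * g⁻¹) = ((g⁻¹ * (g * x)) * ((y * (g * x)) * g⁻¹)) := M0inv hflex h0 (g * x) (y * (g * x))
    have e21 : ((x * y) * ((g * (x * g⁻¹)) * g)) = ((((x * y) * g) * (x * g⁻¹)) * g) := C1el hflex h0 (x * g⁻¹) (x * y)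
    have e22 : (((g * x) * g) * (g⁻¹ * ((y * g) * x))) = (g * (x * ((y * g) * x))) := Bp hflex h0 x ((y * g) * x)
    have e23 : (((g * x) * g) * ((g⁻¹ * y) * (g * x))) = (((g * x) * (g * (g⁻¹ * y))) * (g * x)) := h2 (g * x) (g⁻¹ * y)
    have e24 : (((x * g⁻¹) * g) * ((y * g) * (x * g⁻¹))) = (((x * g⁻¹) * (g * (y * g))) * (x * g⁻¹)) := h2 (x * g⁻¹) (y * g)
    grind
  · rintro ⟨h0, h3⟩
    refine ⟨h0, fun x y => ?_⟩
    have e0 : (g⁻¹ * (g * y)) = y := IPLoop.lip g y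
    have e1 : (g⁻¹⁻¹ * (g⁻¹ * x)) = x := IPLoop.lip g⁻¹ x
    have e2 : (g⁻¹⁻¹ * (g⁻¹ * ((x * g) * (y * x)))) = ((x * g) * (y * x)) := IPLoop.lip g⁻¹ ((x * g) * (y * x))
    have e3 : (g⁻¹⁻¹ * (g⁻¹ * ((x * (g * y)) * x))) = ((x * (g * y)) * x) := IPLoop.lip g⁻¹ ((x * (g * y)) * x)
    have e4 : ((x * g) * g⁻¹) = x := IPLoop.rip g x
    have e5 : ((((x * (g * y)) * x) * g) * g⁻¹) = ((x * (g * y)) * x) := IPLoop.rip g ((x * (g * y)) * x)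
    have e6 : ((y * g⁻¹) * g⁻¹⁻¹) = y := IPLoop.rip g⁻¹ y
    have e7 : (g * (x * g)) = ((g * x) * g) := hflex g x
    have e8 : (g⁻¹ * ((x * g) * g⁻¹)) = ((g⁻¹ * (x * g)) * g⁻¹) := hflex g⁻¹ (x * g)
    have e9 : g⁻¹⁻¹ = g := inv_inv' g
    have e10 : (x * ((g * y) * g)) = (((x * g) * y) * g) := C1el hflex h0 y x
    have e11 : (((g * y) * g) * (g⁻¹ * x)) = (g * (y * x)) := Bp hflex h0 y x
    have e12 : (((x * (g * y)) * g⁻¹) * ((g * x) * g)) = (((x * (g * y)) * x) * g) := Cp hflex h0 (x * (g * y)) x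
    have e13 : (((g⁻¹ * (x * g)) * g⁻¹) * (g * y)) = (g⁻¹ * ((x * g) * y)) := Bpi hflex h0 (x * g) y
    have e14 : (((g⁻¹ * (x * g)) * g⁻¹) * (g * (y * x))) = (g⁻¹ * ((x * g) * (y * x))) := Bpi hflex h0 (x * g) (y * x)
    have e15 : ((x * g) * ((g⁻¹ * (g * y)) * g⁻¹)) = ((x * (g * y)) * g⁻¹) := Cpi hflex h0 x (g * y)
    have e16 : ((((x * g) * y) * g) * g⁻¹) = ((x * g) * y) := IPLoop.rip g ((x * g) * y)
    have e17 : (g⁻¹ * ((x * ((g * y) * g)) * g⁻¹)) = ((g⁻¹ * (x * ((g * y) * g))) * g⁻¹) := hflex g⁻¹ (x * ((g * y) * g))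
    have e18 : ((g⁻¹ * x) * (((g * y) * g) * (g⁻¹ * x))) = (((g⁻¹ * x) * ((g * y) * g)) * (g⁻¹ * x)) := hflex (g⁻¹ * x) ((g * y) * g)
    have e19 : (((g⁻¹ * (x * ((g * y) * g))) * g⁻¹) * x) = (g⁻¹ * ((x * ((g * y) * g)) * (g⁻¹ * x))) := B1eli hflex h0 (x * ((g * y) * g)) x
    have e20 : ((((x * g) * y) * g) * ((g⁻¹ * (x * g)) * g⁻¹)) = ((((x * g) * y) * (x * g)) * g⁻¹) := Cpi hflex h0 ((x * g) * y) (x * g)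
    have e21 : (((x * g) * (y * g⁻¹)) * (g * (x * g))) = (((x * g) * ((y * g⁻¹) * g)) * (x * g)) := h3 (x * g) (y * g⁻¹)
    have e22 : (((g⁻¹ * x) * (g * y)) * (g * (g⁻¹ * x))) = (((g⁻¹ * x) * ((g * y) * g)) * (g⁻¹ * x)) := h3 (g⁻¹ * x) (g * y)
    grind


end CRIFPaper
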